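/- For a countable directed graph D=(V,E) the following are equivalent: (1) for every subset V_1 ⊆ V such that both V_1 and V∖V_1 are infinite, there exists a nonempty W_1 ⊆ V_1 such that every v ∈ W_1 has infinite out-degree in W_1; (2) for every bijection φ: V → ℤ there exists an infinite increasing directed path in D. -/

import Mathlib

private lemma counting_lemma {A : Type*} [Infinite A] {L : Type*} [LinearOrder L]
    (K : A → L) (hinj : Function.Injective K)
    (hfin : ∀ a : A, {b : A | K b < K a}.Finite) :
    ∃ M : A → ℕ, Function.Bijective M ∧ ∀ a b : A, K a < K b → M a < M b := by
  classical
  set M : A → ℕ := fun a => (hfin a).toFinset.card with hM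
  have hmono : ∀ a b : A, K a < K b → M a < M b := by
    intro a b hab
    apply Finset.card_lt_card
    constructor
    · intro c hc
      simp only [Set.Finite.mem_toFinset, Set.mem_setOf_eq] at hc ⊢
      exact lt_trans hc hab
    · intro hsub
      have := hsub ((hfin b).mem_toFinset.2 (show K a < K b from hab))
      simp only [Set.Finite.mem_toFinset, Set.mem_setOf_eq] at this
      exact lt_irrefl _ this
  have hMinj : Function.Injective M := by
    intro a b hab
    rcases lt_trichotomy (K a) (K b) with h | h | h
    · exact absurd hab (Nat.ne_of_lt (hmono _ _ h))
    · exact hinj h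
    · exact absurd hab.symm (Nat.ne_of_lt (hmono _ _ h))
  have descent : ∀ b : A, 0 < M b → ∃ a : A, M a + 1 = M b := by
    intro b hb
    have hne : ((hfin b).toFinset).Nonempty := Finset.card_pos.1 hb
    obtain ⟨a, haS, hamax⟩ := Finset.exists_max_image (hfin b).toFinset K hne
    refine ⟨a, ?_⟩
    have haKb : K a < K b := by
      have := haS; simpa [Set.Finite.mem_toFinset] using this
    have hset : (hfin a).toFinset = (hfin b).toFinset.erase a := by
      ext c
      simp only [Set.Finite.mem_toFinset, Set.mem_setOf_eq, Finset.mem_erase,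
        Set.Finite.mem_toFinset]
      constructor
      · intro hc
        exact ⟨fun h => lt_irrefl _ (h ▸ hc), lt_trans hc haKb⟩
      · rintro ⟨hne', hc⟩
        have hle := hamax c ((hfin b).mem_toFinset.2 hc)
        rcases lt_or_eq_of_le hle with h | h
        · exact h
        · exact absurd (hinj h) hne'
    have hcard : M a = M b - 1 := by
      show (hfin a).toFinset.card = (hfin b).toFinset.card - 1
      rw [hset, Finset.card_erase_of_mem haS]
    omega
  have hchain : ∀ k : ℕ, ∀ b : A, ∀ n : ℕ, M b = n + k → ∃ a, M a = n := by
    intro k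
    induction k with
    | zero => intro b n h; exact ⟨b, by omega⟩
    | succ k ih =>
      intro b n h
      obtain ⟨a, ha⟩ := descent b (by omega)
      exact ih a n (by omega)
  have hsurj : Function.Surjective M := by
    intro n
    have hinf : (Set.range M).Infinite := Set.infinite_range_of_injective hMinj
    have hns : ¬ (Set.range M ⊆ Set.Iic n) := by
      intro h
      exact ((Set.finite_Iic n).subset h).not_infinite hinf
    obtain ⟨m, hm, hmn⟩ := Set.not_subset.1 hns
    obtain ⟨b, rfl⟩ := hm
    simp only [Set.mem_Iic, not_le] at hmn
    exact hchain (M b - n) b n (by omega)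
  exact ⟨M, ⟨hMinj, hsurj⟩, hmono⟩

theorem stmt15 {V : Type*} [Countable V] [Infinite V] (E : Set (V × V)) :
    (∀ V₁ : Set V, V₁.Infinite → V₁ᶜ.Infinite →
      ∃ W₁ ⊆ V₁, W₁.Nonempty ∧ ∀ v ∈ W₁, {u | u ∈ W₁ ∧ (v, u) ∈ E}.Infinite) ↔
    (∀ φ : V ≃ ℤ, ∃ w : ℕ → V, Function.Injective w ∧
      ∀ i, (w i, w (i + 1)) ∈ E ∧ φ (w i) < φ (w (i + 1))) := by
  classical
  constructor
  · -- (1) → (2)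
    intro h φ
    set V₁ : Set V := φ ⁻¹' {n : ℤ | 0 ≤ n} with hV₁def
    have hinf1 : V₁.Infinite := by
      apply Set.Infinite.preimage
      · exact Set.infinite_of_injective_forall_mem (f := fun n : ℕ => (n : ℤ))
          (fun a b hab => by simpa using hab) (fun n => by simp)
      · intro x _; exact ⟨φ.symm x, by simp⟩
    have hinf2 : V₁ᶜ.Infinite := by
      have hc : V₁ᶜ = φ ⁻¹' {n : ℤ | n < 0} := by
        ext v; simp [hV₁def, not_le]
      rw [hc]
      apply Set.Infinite.preimage
      · refine Set.infinite_of_injective_forall_mem (f := fun n : ℕ => (-(n : ℤ) - 1))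
          (fun a b hab => ?_) (fun n => by simp; omega)
        simp only [sub_left_inj, neg_inj, Nat.cast_inj] at hab
        exact hab
      · intro x _; exact ⟨φ.symm x, by simp⟩
    obtain ⟨W₁, hsub, ⟨v₀, hv₀⟩, hdeg⟩ := h V₁ hinf1 hinf2
    have key : ∀ v, v ∈ W₁ → ∃ u, (u ∈ W₁ ∧ (v, u) ∈ E) ∧ φ v < φ u := by
      intro v hv
      have hS : {u | u ∈ W₁ ∧ (v, u) ∈ E}.Infinite := hdeg v hv
      have hfin : (φ ⁻¹' (Set.Icc 0 (φ v))).Finite :=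
        Set.Finite.preimage ((Equiv.injective φ).injOn) (Set.finite_Icc _ _)
      obtain ⟨u, hu, hu2⟩ := (hS.diff hfin).nonempty
      refine ⟨u, hu, ?_⟩
      have h0 : (0 : ℤ) ≤ φ u := hsub hu.1
      by_contra hle
      exact hu2 ⟨h0, not_lt.1 hle⟩
    let f : {v // v ∈ W₁} → {v // v ∈ W₁} :=
      fun p => ⟨(key p.1 p.2).choose, (key p.1 p.2).choose_spec.1.1⟩
    let s : ℕ → {v // v ∈ W₁} := fun n => f^[n] ⟨v₀, hv₀⟩
    have hstep : ∀ n, ((s n).1, (s (n + 1)).1) ∈ E ∧ φ (s n).1 < φ (s (n + 1)).1 := by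
      intro n
      have hs : s (n + 1) = f (s n) := Function.iterate_succ_apply' f n _
      rw [hs]
      exact ⟨(key (s n).1 (s n).2).choose_spec.1.2, (key (s n).1 (s n).2).choose_spec.2⟩
    have hmono : StrictMono fun n => φ (s n).1 :=
      strictMono_nat_of_lt_succ fun n => (hstep n).2
    refine ⟨fun n => (s n).1, ?_, fun i => hstep i⟩
    intro i j hij
    exact hmono.injective (congrArg φ hij)
  · -- (2) → (1)
    intro h2 V₁ hV₁inf hV₁cinf
    by_contra hW
    push_neg at hW
    -- hW : ∀ W₁ ⊆ V₁, W₁.Nonempty → ∃ v ∈ W₁, ¬(…).Infinite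
    set Y : Set V := {v | v ∈ V₁ ∧ {u | u ∈ V₁ ∧ (v, u) ∈ E}.Finite} with hYdef
    have hYsub : Y ⊆ V₁ := fun v hv => hv.1
    have hYinf : Y.Infinite := by
      by_contra hY
      rw [Set.not_infinite] at hY
      have hWset : (V₁ \ Y).Infinite := hV₁inf.diff hY
      obtain ⟨v, hv, hvfin⟩ := hW (V₁ \ Y) Set.diff_subset hWset.nonempty
      have hfin2 : {u | u ∈ V₁ ∧ (v, u) ∈ E}.Finite := by
        apply Set.Finite.subset (hvfin.union hY)
        intro u hu
        by_cases huY : u ∈ Y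
        · exact Or.inr huY
        · exact Or.inl ⟨⟨hu.1, huY⟩, hu.2⟩
      exact hv.2 ⟨hv.1, hfin2⟩
    have hYcinf : Yᶜ.Infinite := hV₁cinf.mono (Set.compl_subset_compl.2 hYsub)
    haveI : Infinite ↥Y := hYinf.to_subtype
    haveI : Infinite ↥(Yᶜ) := hYcinf.to_subtype
    have hout : ∀ y : ↥Y, {z : ↥Y | (y.1, z.1) ∈ E}.Finite := by
      intro y
      have h1 : {u | u ∈ V₁ ∧ (y.1, u) ∈ E}.Finite := y.2.2
      have hss : {z : ↥Y | (y.1, z.1) ∈ E} ⊆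
          Subtype.val ⁻¹' {u | u ∈ V₁ ∧ (y.1, u) ∈ E} := by
        intro z hz; exact ⟨z.2.1, hz⟩
      exact ((h1.preimage (Subtype.val_injective.injOn))).subset hss
    obtain ⟨yE, hyE⟩ := exists_surjective_nat ↥Y
    -- cumulative finite blocks
    let A : ℕ → Set ↥Y := fun n =>
      Nat.rec ∅ (fun m Am => (Am ∪ ⋃ y ∈ Am, {z : ↥Y | (y.1, z.1) ∈ E}) ∪ {yE m}) n
    have hAsucc : ∀ n, A (n + 1) =
        (A n ∪ ⋃ y ∈ A n, {z : ↥Y | (y.1, z.1) ∈ E}) ∪ {yE n} := fun n => rfl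
    have hAfin : ∀ n, (A n).Finite := by
      intro n
      induction n with
      | zero => exact Set.finite_empty
      | succ n ih =>
        rw [hAsucc]
        exact (ih.union (ih.biUnion (fun y _ => hout y))).union (Set.finite_singleton _)
    have hAmono : Monotone A := by
      apply monotone_nat_of_le_succ
      intro n
      rw [hAsucc]
      exact Set.subset_union_left.trans Set.subset_union_left
    have hAex : ∀ y : ↥Y, ∃ n, y ∈ A n := by
      intro y
      obtain ⟨m, hm⟩ := hyE y
      exact ⟨m + 1, by rw [hAsucc, ← hm]; exact Set.mem_union_right _ rfl⟩
    let β : ↥Y → ℕ := fun y =>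
      @Nat.find (fun n => y ∈ A n) (fun _ => Classical.propDecidable _) (hAex y)
    have hβmem : ∀ y, y ∈ A (β y) := fun y =>
      @Nat.find_spec (fun n => y ∈ A n) (fun _ => Classical.propDecidable _) (hAex y)
    have hβedge : ∀ y z : ↥Y, (y.1, z.1) ∈ E → β z ≤ β y + 1 := by
      intro y z he
      have hz : z ∈ A (β y + 1) := by
        rw [hAsucc]
        exact Set.mem_union_left _ (Set.mem_union_right _ (Set.mem_biUnion (hβmem y) he))
      exact @Nat.find_min' (fun n => z ∈ A n) (fun _ => Classical.propDecidable _) (hAex z) _ hz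
    have hβfiber : ∀ n, {y : ↥Y | β y ≤ n}.Finite := by
      intro n
      apply (hAfin n).subset
      intro y hy
      exact hAmono hy (hβmem y)
    -- the pairing function
    let p : ℕ → ℕ := fun n => if Even n then n + 1 else n - 1
    have hple : ∀ n, n ≤ p n + 1 := by
      intro n
      by_cases h : Even n <;> simp only [p, if_pos, if_neg, h, if_true, if_false] <;> omega
    obtain ⟨iY, hiY⟩ := exists_injective_nat ↥Y
    let K : ↥Y → ℕ ×ₗ ℕ := fun y => toLex (p (β y), iY y)
    have hKinj : Function.Injective K := by
      intro a b hab
      have : iY a = iY b := congrArg (fun x => (ofLex x).2) hab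
      exact hiY this
    have hKfin : ∀ y, {z : ↥Y | K z < K y}.Finite := by
      intro y
      apply (hβfiber (p (β y) + 2)).subset
      intro z hz
      have h1 : p (β z) ≤ p (β y) := by
        rcases (Prod.Lex.lt_iff).1 hz with h | ⟨h, _⟩
        · exact le_of_lt h
        · exact le_of_eq h
      have h2 := hple (β z)
      simp only [Set.mem_setOf_eq]
      omega
    obtain ⟨M, hMbij, hMmono⟩ := counting_lemma K hKinj hKfin
    let e₁ : ↥Y ≃ ℕ := Equiv.ofBijective M hMbij
    obtain ⟨e₂⟩ : Nonempty (↥(Yᶜ) ≃ ℕ) := nonempty_equiv_of_countable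
    -- build φ
    let F : V → ℤ := fun v =>
      @dite _ (v ∈ Y) (Classical.propDecidable _) (fun h => ((M ⟨v, h⟩ : ℕ) : ℤ))
        (fun h => Int.negSucc (e₂ ⟨v, Set.mem_compl h⟩))
    let G : ℤ → V := fun z => Int.rec (fun n => (e₁.symm n).1) (fun n => (e₂.symm n).1) z
    have hFY : ∀ (v : V) (h : v ∈ Y), F v = ((M ⟨v, h⟩ : ℕ) : ℤ) := by
      intro v h
      exact dif_pos h
    have hFneg' : ∀ (v : V) (h : v ∉ Y),
        F v = Int.negSucc (e₂ ⟨v, Set.mem_compl h⟩) := by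
      intro v h
      exact dif_neg h
    have hFneg : ∀ (v : V), v ∉ Y → F v < 0 := by
      intro v h
      rw [hFneg' v h]
      exact Int.negSucc_lt_zero _
    have hleft : Function.LeftInverse G F := by
      intro v
      by_cases h : v ∈ Y
      · rw [hFY v h]
        show (e₁.symm (M ⟨v, h⟩)).1 = v
        rw [show M ⟨v, h⟩ = e₁ ⟨v, h⟩ from rfl, Equiv.symm_apply_apply]
      · rw [hFneg' v h]
        show (e₂.symm (e₂ ⟨v, Set.mem_compl h⟩)).1 = v
        rw [Equiv.symm_apply_apply]
    have hright : Function.RightInverse G F := by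
      intro z
      cases z with
      | ofNat n =>
        have hm : ((e₁.symm n : ↥Y) : V) ∈ Y := (e₁.symm n).2
        show F ((e₁.symm n : ↥Y) : V) = Int.ofNat n
        rw [hFY _ hm, Subtype.coe_eta]
        rw [show M (e₁.symm n) = e₁ (e₁.symm n) from rfl, Equiv.apply_symm_apply]
        rfl
      | negSucc n =>
        have hm : ((e₂.symm n : ↥(Yᶜ)) : V) ∉ Y :=
          Set.notMem_of_mem_compl (e₂.symm n).2
        show F ((e₂.symm n : ↥(Yᶜ)) : V) = Int.negSucc n
        rw [hFneg' _ hm]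
        congr 1
        rw [Subtype.coe_eta, Equiv.apply_symm_apply]
    let φ : V ≃ ℤ := ⟨F, G, hleft, hright⟩
    obtain ⟨w, hwinj, hw⟩ := h2 φ
    have hφmono : ∀ n, φ (w n) < φ (w (n + 1)) := fun n => (hw n).2
    have hlb : ∀ n : ℕ, φ (w 0) + n ≤ φ (w n) := by
      intro n
      induction n with
      | zero => simp
      | succ n ih =>
        have h1 := hφmono n
        push_cast
        omega
    set Kn : ℕ := (φ (w 0)).natAbs with hKndef
    have hKn : -(φ (w 0)) ≤ (Kn : ℤ) := by
      rw [hKndef, ← Int.abs_eq_natAbs]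
      exact neg_le_abs _
    have hpos : ∀ i : ℕ, 0 ≤ φ (w (Kn + i)) := by
      intro i
      have h1 := hlb (Kn + i)
      push_cast at h1
      omega
    have hmemY : ∀ i : ℕ, w (Kn + i) ∈ Y := by
      intro i
      by_contra hcon
      exact absurd (hFneg _ hcon) (not_lt.2 (hpos i))
    let y : ℕ → ↥Y := fun i => ⟨w (Kn + i), hmemY i⟩
    have hyedge : ∀ i, ((y i).1, (y (i + 1)).1) ∈ E := by
      intro i
      exact (hw (Kn + i)).1
    have hyM : ∀ i, M (y i) < M (y (i + 1)) := by
      intro i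
      have h1 : φ (w (Kn + i)) < φ (w (Kn + i + 1)) := hφmono (Kn + i)
      have e1 : φ (w (Kn + i)) = ((M (y i) : ℕ) : ℤ) := hFY _ (hmemY i)
      have e2 : φ (w (Kn + i + 1)) = ((M (y (i + 1)) : ℕ) : ℤ) := hFY _ (hmemY (i + 1))
      rw [e1, e2] at h1
      exact_mod_cast h1
    set b : ℕ → ℕ := fun i => β (y i) with hbdef
    have hyp : ∀ i, p (b i) ≤ p (b (i + 1)) := by
      intro i
      by_contra hgt
      push_neg at hgt
      have hlex : K (y (i + 1)) < K (y i) := by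
        rw [Prod.Lex.lt_iff]
        exact Or.inl hgt
      exact absurd (hyM i) (not_lt.2 (le_of_lt (hMmono _ _ hlex)))
    have hyb : ∀ i, b (i + 1) ≤ b i + 1 := fun i => hβedge _ _ (hyedge i)
    have claimE : ∀ i, Even (b i) → b (i + 1) = b i := by
      intro i he
      have h1 := hyp i
      have h2 := hyb i
      by_cases he' : Even (b (i + 1))
      · simp only [p, if_pos he, if_pos he'] at h1
        obtain ⟨k, hk⟩ := he
        obtain ⟨k', hk'⟩ := he'
        omega
      · simp only [p, if_pos he, if_neg he'] at h1
        have hb1 : b (i + 1) ≠ 0 := by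
          intro hz; rw [hz] at he'; exact he' (by simp)
        omega
    have claimO : ∀ i, ¬Even (b i) → ¬Even (b (i + 1)) → b (i + 1) = b i := by
      intro i ho ho'
      have h1 := hyp i
      have h2 := hyb i
      simp only [p, if_neg ho, if_neg ho'] at h1
      obtain ⟨k, hk⟩ := Nat.not_even_iff_odd.1 ho
      obtain ⟨k', hk'⟩ := Nat.not_even_iff_odd.1 ho'
      omega
    have fiber_contra : ∀ (i0 c : ℕ), (∀ j, b (i0 + j) = c) → False := by
      intro i0 c hc
      have hinj2 : Function.Injective (fun j => y (i0 + j)) := by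
        intro a a' haa
        have hval := congrArg Subtype.val haa
        have := hwinj hval
        omega
      have hrange : Set.range (fun j => y (i0 + j)) ⊆ {z : ↥Y | β z ≤ c} := by
        rintro z ⟨j, rfl⟩
        exact le_of_eq (hc j)
      exact ((hβfiber c).subset hrange).not_infinite (Set.infinite_range_of_injective hinj2)
    by_cases hEv : ∃ i, Even (b i)
    · obtain ⟨i, hi⟩ := hEv
      apply fiber_contra i (b i)
      intro j
      induction j with
      | zero => rfl
      | succ j ih =>
        have heij : Even (b (i + j)) := by rw [ih]; exact hi
        show b ((i + j) + 1) = b i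
        rw [claimE _ heij, ih]
    · push_neg at hEv
      simp only [Nat.not_even_iff_odd] at hEv
      apply fiber_contra 0 (b 0)
      intro j
      induction j with
      | zero => rfl
      | succ j ih =>
        show b ((0 + j) + 1) = b 0
        rw [claimO _ (Nat.not_even_iff_odd.2 (hEv _)) (Nat.not_even_iff_odd.2 (hEv _)), ih]
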